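/- Let F, G : C → D be multifunctors between closed multicategories with unit objects inducing the same closed functor Φ = (φ, φ̂, φ⁰) between the underlying closed categories. Then F = G as multifunctors. -/

import Mathlib

universe u v

/-- A family of multimorphisms `f_i : Xss_i → Ys_i` (with matching lengths),
used to express simultaneous composition in a multicategory. -/
inductive HomFam (Obj : Type u) (Hom : List Obj → Obj → Type v) :
    List (List Obj) → List Obj → Type (max u v)
  | nil : HomFam Obj Hom [] []
  | cons {Xs Y Xss Ys} : Hom Xs Y → HomFam Obj Hom Xss Ys →
      HomFam Obj Hom (Xs :: Xss) (Y :: Ys)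

/-- A family of families of multimorphisms. -/
inductive FamFam (Obj : Type u) (Hom : List Obj → Obj → Type v) :
    List (List (List Obj)) → List (List Obj) → Type (max u v)
  | nil : FamFam Obj Hom [] []
  | cons {Xss Ys Xsss Yss} : HomFam Obj Hom Xss Ys → FamFam Obj Hom Xsss Yss →
      FamFam Obj Hom (Xss :: Xsss) (Ys :: Yss)

variable {Obj : Type u} {Hom : List Obj → Obj → Type v}

/-- The family of identities on a list of objects. -/
def idFam (ident : ∀ X, Hom [X] X) : ∀ Ys : List Obj,
    HomFam Obj Hom (Ys.map fun y => [y]) Ys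
  | [] => .nil
  | y :: ys => .cons (ident y) (idFam ident ys)

/-- Concatenation of families. -/
def appendFam : ∀ {A B C D}, HomFam Obj Hom A B → HomFam Obj Hom C D →
    HomFam Obj Hom (A ++ C) (B ++ D)
  | _, _, _, _, .nil, t => t
  | _, _, _, _, .cons f fs, t => .cons f (appendFam fs t)

/-- Flattening a family of families. -/
def flattenFam : ∀ {Xsss Yss}, FamFam Obj Hom Xsss Yss →
    HomFam Obj Hom Xsss.flatten Yss.flatten
  | _, _, .nil => .nil
  | _, _, .cons fs fss => appendFam fs (flattenFam fss)

/-- Componentwise composition of a family of families with a family. -/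
def zipComp
    (comp : ∀ {Xss Ys Z}, HomFam Obj Hom Xss Ys → Hom Ys Z → Hom Xss.flatten Z) :
    ∀ {Xsss Yss Zs}, FamFam Obj Hom Xsss Yss → HomFam Obj Hom Yss Zs →
      HomFam Obj Hom (Xsss.map List.flatten) Zs
  | _, _, _, .nil, .nil => .nil
  | _, _, _, .cons fs fss, .cons g gs => .cons (comp fs g) (zipComp comp fss gs)

/-- A multicategory: objects, multimorphisms `X₁,…,Xₙ → Y`, identities and an
associative and unital simultaneous composition `(f₁,…,fₙ) · g`. -/
structure Multicategory : Type (max (u + 1) (v + 1)) where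
  Obj : Type u
  Hom : List Obj → Obj → Type v
  ident : ∀ X : Obj, Hom [X] X
  comp : ∀ {Xss : List (List Obj)} {Ys : List Obj} {Z : Obj},
    HomFam Obj Hom Xss Ys → Hom Ys Z → Hom Xss.flatten Z
  id_comp : ∀ {Ys Z} (g : Hom Ys Z), HEq (comp (idFam ident Ys) g) g
  comp_id : ∀ {Xs Y} (f : Hom Xs Y), HEq (comp (.cons f .nil) (ident Y)) f
  assoc : ∀ {Xsss Yss Zs Z} (fss : FamFam Obj Hom Xsss Yss)
    (gs : HomFam Obj Hom Yss Zs) (h : Hom Zs Z),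
    HEq (comp (zipComp (fun fs g => comp fs g) fss gs) h)
        (comp (flattenFam fss) (comp gs h))

namespace Multicategory

variable (M : Multicategory.{u, v})

theorem map_singleton_flatten (l : List M.Obj) :
    (l.map fun x => [x]).flatten = l := by
  induction l <;> simp_all

theorem sflat (Xs Ys : List M.Obj) :
    ((Xs.map fun x => [x]) ++ [Ys]).flatten = Xs ++ Ys := by
  induction Xs <;> simp_all

theorem sflat2 (Xs Γ : List M.Obj) :
    (Xs :: (Γ.map fun x => [x])).flatten = Xs ++ Γ := by
  simp [List.flatten_cons, map_singleton_flatten]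

/-- `(1,…,1,f) · g` : plugging `f` into the last argument of `g`. -/
def plug {Xs Ys : List M.Obj} {H Z : M.Obj} (f : M.Hom Ys H)
    (g : M.Hom (Xs ++ [H]) Z) : M.Hom (Xs ++ Ys) Z :=
  cast (congrArg (M.Hom · Z) (M.sflat Xs Ys))
    (M.comp (appendFam (idFam M.ident Xs) (.cons f .nil)) g)

/-- `(f,1,…,1) · g` : plugging `f` into the first argument of `g`. -/
def plugFirst {Xs Γ : List M.Obj} {Y Z : M.Obj} (f : M.Hom Xs Y)
    (g : M.Hom (Y :: Γ) Z) : M.Hom (Xs ++ Γ) Z :=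
  cast (congrArg (M.Hom · Z) (M.sflat2 Xs Γ))
    (M.comp (.cons f (idFam M.ident Γ)) g)

/-- `(f) · h` : composing a multimorphism with a unary morphism. -/
def postcomp {Γ : List M.Obj} {Y Z : M.Obj} (f : M.Hom Γ Y) (h : M.Hom [Y] Z) :
    M.Hom Γ Z :=
  cast (congrArg (M.Hom · Z) (by simp : ([Γ].flatten : List M.Obj) = Γ))
    (M.comp (.cons f .nil) h)

/-- Composition in the underlying category. -/
def comp1 {X Y Z : M.Obj} (f : M.Hom [X] Y) (g : M.Hom [Y] Z) : M.Hom [X] Z :=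
  M.postcomp f g

/-- `(a, b) · g` : binary simultaneous composition. -/
def pair {As Bs : List M.Obj} {A' B' Cc : M.Obj} (a : M.Hom As A') (b : M.Hom Bs B')
    (g : M.Hom [A', B'] Cc) : M.Hom (As ++ Bs) Cc :=
  cast (congrArg (M.Hom · Cc) (by simp : ([As, Bs].flatten : List M.Obj) = As ++ Bs))
    (M.comp (.cons a (.cons b .nil)) g)

/-- `(f₁,…,fₘ,1) · g` for a family of unary morphisms `fᵢ`. -/
def sideComp {As Bs : List M.Obj} (fs : HomFam M.Obj M.Hom (As.map fun a => [a]) Bs)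
    {H Z : M.Obj} (g : M.Hom (Bs ++ [H]) Z) : M.Hom (As ++ [H]) Z :=
  cast (congrArg (M.Hom · Z) (M.sflat As [H]))
    (M.comp (appendFam fs (.cons (M.ident H) .nil)) g)

end Multicategory

/-- The image of a family of multimorphisms under a multifunctor. -/
def mapFam {M N : Multicategory.{u, v}} (obj : M.Obj → N.Obj)
    (map : ∀ {Xs Y}, M.Hom Xs Y → N.Hom (Xs.map obj) (obj Y)) :
    ∀ {Xss Ys}, HomFam M.Obj M.Hom Xss Ys →
      HomFam N.Obj N.Hom (Xss.map (List.map obj)) (Ys.map obj)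
  | _, _, .nil => .nil
  | _, _, .cons f fs => .cons (map f) (mapFam obj @map fs)

/-- A multifunctor between multicategories. -/
structure Multifunctor (M N : Multicategory.{u, v}) : Type (max u v) where
  obj : M.Obj → N.Obj
  map : ∀ {Xs Y}, M.Hom Xs Y → N.Hom (Xs.map obj) (obj Y)
  map_ident : ∀ X, map (M.ident X) = N.ident (obj X)
  map_comp : ∀ {Xss Ys Z} (fs : HomFam M.Obj M.Hom Xss Ys) (g : M.Hom Ys Z),
    HEq (map (M.comp fs g)) (N.comp (mapFam obj @map fs) (map g))

/-- A closed multicategory : a multicategory together with internal hom objects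
and evaluation morphisms such that `φ : f ↦ (1,…,1,f)·ev` is a bijection. -/
structure ClosedMulticategory extends Multicategory.{u, v} where
  ihom : List Obj → Obj → Obj
  ev : ∀ (Xs : List Obj) (Z : Obj), Hom (Xs ++ [ihom Xs Z]) Z
  closed : ∀ (Xs Ys : List Obj) (Z : Obj),
    Function.Bijective
      (fun f : Hom Ys (ihom Xs Z) => toMulticategory.plug f (ev Xs Z))

namespace ClosedMulticategory

variable (C : ClosedMulticategory.{u, v})

/-- The inverse of the bijection `φ` : currying. -/
noncomputable def curry {Xs Ys : List C.Obj} {Z : C.Obj}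
    (f : C.Hom (Xs ++ Ys) Z) : C.Hom Ys (C.ihom Xs Z) :=
  (Equiv.ofBijective _ (C.closed Xs Ys Z)).symm f

/-- The covariant action `C̲(W₁,…,Wₘ; h)` of a unary morphism `h` on internal
homs, defined by `(1,…,1,C̲(Ws;h)) · ev_{Ws;B} = ev_{Ws;A} · h`. -/
noncomputable def homCovM (Ws : List C.Obj) {A B : C.Obj} (h : C.Hom [A] B) :
    C.Hom [C.ihom Ws A] (C.ihom Ws B) :=
  C.curry (Xs := Ws) (C.toMulticategory.postcomp (C.ev Ws A) h)

/-- The contravariant action `C̲(h; Z)` of a unary morphism `h : A → B` on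
internal homs, defined by `(1,C̲(h;Z)) · ev_{A;Z} = (h,1) · ev_{B;Z}`. -/
noncomputable def homContra {A B : C.Obj} (h : C.Hom [A] B) (Z : C.Obj) :
    C.Hom [C.ihom [B] Z] (C.ihom [A] Z) :=
  C.curry (Xs := [A]) (C.toMulticategory.plugFirst h (C.ev [B] Z))

/-- The contravariant action `C̲(f₁,…,fₘ; Z)` of a family of unary morphisms on
internal homs. -/
noncomputable def homContraM {As Bs : List C.Obj}
    (fs : HomFam C.Obj C.Hom (As.map fun a => [a]) Bs) (Z : C.Obj) :
    C.Hom [C.ihom Bs Z] (C.ihom As Z) :=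
  C.curry (Xs := As) (C.toMulticategory.sideComp fs (C.ev Bs Z))

/-- Composition `μ` of the `C`-category `C̲`, determined by
`(1_X, μ)·ev_{X;Z} = (ev_{X;Y},1)·ev_{Y;Z}`. -/
noncomputable def mu (X Y Z : C.Obj) :
    C.Hom [C.ihom [X] Y, C.ihom [Y] Z] (C.ihom [X] Z) :=
  C.curry (Xs := [X])
    (C.toMulticategory.plugFirst (Xs := [X, C.ihom [X] Y]) (Γ := [C.ihom [Y] Z])
      (C.ev [X] Y) (C.ev [Y] Z))

/-- The identity `⟨1_X⟩ : () → C̲(X;X)` of the `C`-category `C̲`. -/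
noncomputable def oneHom (X : C.Obj) : C.Hom [] (C.ihom [X] X) :=
  C.curry (Xs := [X]) (Ys := []) (C.ident X)

/-- The morphism `L^X_{YZ} : C̲(Y;Z) → C̲(C̲(X;Y);C̲(X;Z))`, uniquely determined
by `(1, L^X_{YZ}) · ev = μ`. -/
noncomputable def Lhat (X Y Z : C.Obj) :
    C.Hom [C.ihom [Y] Z] (C.ihom [C.ihom [X] Y] (C.ihom [X] Z)) :=
  C.curry (Xs := [C.ihom [X] Y]) (C.mu X Y Z)

/-- The action `C̲(u;1) : C̲(1;X) → C̲(;X) = X` of a nullary morphism `u`. -/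
def uAct {one : C.Obj} (u : C.Hom [] one) (X : C.Obj) :
    C.Hom [C.ihom [one] X] X :=
  C.toMulticategory.plugFirst u (C.ev [one] X)

/-- `(one, u)` is a unit object of the closed multicategory `C` if all the
morphisms `C̲(u;1) : C̲(1;X) → X` are invertible. -/
def IsUnitObj (one : C.Obj) (u : C.Hom [] one) : Prop :=
  ∀ X : C.Obj, ∃ inv : C.Hom [X] (C.ihom [one] X),
    C.toMulticategory.comp1 (C.uAct u X) inv = C.ident (C.ihom [one] X) ∧
    C.toMulticategory.comp1 inv (C.uAct u X) = C.ident X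

end ClosedMulticategory

/-- The closing transformation `F̲_{Xs;Z} : F C̲(Xs;Z) → D̲(F Xs; FZ)` of a
multifunctor between closed multicategories, i.e. the unique morphism with
`(1,…,1,F̲) · ev^D = F(ev^C)`. -/
noncomputable def closingTrans {C D : ClosedMulticategory.{u, v}}
    (F : Multifunctor C.toMulticategory D.toMulticategory)
    (Xs : List C.Obj) (Z : C.Obj) :
    D.Hom [F.obj (C.ihom Xs Z)] (D.ihom (Xs.map F.obj) (F.obj Z)) :=
  D.curry (Xs := Xs.map F.obj)
    (cast (congrArg (D.Hom · (F.obj Z)) (List.map_append : List.map F.obj (Xs ++ [C.ihom Xs Z]) = Xs.map F.obj ++ [C.ihom Xs Z].map F.obj))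
      (F.map (C.ev Xs Z)))

/-- Uncurrying a curried morphism gives it back. -/
private lemma ClosedMulticategory.plug_curry (C : ClosedMulticategory.{u, v})
    {Xs Ys : List C.Obj} {Z : C.Obj} (f : C.Hom (Xs ++ Ys) Z) :
    C.toMulticategory.plug (C.curry f) (C.ev Xs Z) = f :=
  (Equiv.ofBijective _ (C.closed Xs Ys Z)).apply_symm_apply f

/-- Currying is injective. -/
private lemma ClosedMulticategory.curry_inj (C : ClosedMulticategory.{u, v})
    {Xs Ys : List C.Obj} {Z : C.Obj} {a b : C.Hom (Xs ++ Ys) Z}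
    (h : C.curry (Xs := Xs) (Ys := Ys) a = C.curry b) : a = b :=
  (Equiv.ofBijective _ (C.closed Xs Ys Z)).symm.injective h

/-- A multifunctor's action sends heterogeneously equal morphisms (over equal
source lists) to heterogeneously equal morphisms. -/
private lemma map_heq {M N : Multicategory.{u, v}} (Fo : M.Obj → N.Obj)
    (Fm : ∀ {Xs Y}, M.Hom Xs Y → N.Hom (Xs.map Fo) (Fo Y))
    {Xs Xs' : List M.Obj} {Y : M.Obj} (h : Xs = Xs')
    {f : M.Hom Xs Y} {f' : M.Hom Xs' Y} (hf : HEq f f') :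
    HEq (Fm f) (Fm f') := by
  subst h; rw [eq_of_heq hf]

open ClosedMulticategory in
/-- Let `F, G : C → D` be multifunctors between closed
multicategories with unit objects inducing the same closed functor between the
underlying closed categories (same object map, same action on unary morphisms,
same closing transformations `φ̂`, and same `φ⁰`, the latter being equivalent to
`F(u) = G(u)`).  Then `F = G` as multifunctors. -/
theorem multifunctor_ext (C D : ClosedMulticategory.{u, v})
    (oneC : C.Obj) (uC : C.Hom [] oneC) (hC : C.IsUnitObj oneC uC)
    (oneD : D.Obj) (uD : D.Hom [] oneD) (hD : D.IsUnitObj oneD uD)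
    (F G : Multifunctor C.toMulticategory D.toMulticategory)
    (hobj : F.obj = G.obj)
    (hmap : ∀ {X Y : C.Obj} (f : C.Hom [X] Y), HEq (F.map f) (G.map f))
    (hu : HEq (F.map uC) (G.map uC))
    (hhat : ∀ X Y : C.Obj, HEq (closingTrans F [X] Y) (closingTrans G [X] Y)) :
    F = G := by
  obtain ⟨Fo, Fm, Fmi, Fmc⟩ := F
  obtain ⟨Go, Gm, Gmi, Gmc⟩ := G
  dsimp only at hobj
  subst hobj
  -- unary morphisms agree
  have hmap2 : ∀ (X Y : C.Obj) (f : C.Hom [X] Y), Fm f = Gm f :=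
    fun X Y f => eq_of_heq (hmap f)
  have hu2 : Fm uC = Gm uC := eq_of_heq hu
  -- binary evaluations agree, via the closing transformations
  have hev : ∀ X Y : C.Obj, Fm (C.ev [X] Y) = Gm (C.ev [X] Y) := by
    intro X Y
    have h1 := eq_of_heq (hhat X Y)
    unfold closingTrans at h1
    have h2 := D.curry_inj h1
    exact eq_of_heq (((cast_heq _ _).symm.trans (heq_of_eq h2)).trans (cast_heq _ _))
  suffices hFG : ∀ (Xs : List C.Obj) (Y : C.Obj) (f : C.Hom Xs Y), Fm f = Gm f by
    have hm : @Fm = @Gm := funext fun Xs => funext fun Y => funext fun f => hFG Xs Y f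
    subst hm
    rfl
  intro Xs
  induction Xs with
  | nil =>
    intro Y f
    obtain ⟨inv, hinv1, hinv2⟩ := hC Y
    let H : C.Obj := C.ihom [oneC] Y
    let k : C.Hom [] H := C.toMulticategory.postcomp f inv
    let g : C.Hom [oneC] Y := C.toMulticategory.plug (Xs := [oneC]) k (C.ev [oneC] Y)
    have bk : k = C.toMulticategory.comp (HomFam.cons f HomFam.nil) inv := by
      show C.toMulticategory.postcomp f inv = _
      unfold Multicategory.postcomp
      exact eq_of_heq (cast_heq _ _)
    have bg : g = C.toMulticategory.comp
        (HomFam.cons (C.ident oneC) (HomFam.cons k HomFam.nil)) (C.ev [oneC] Y) := by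
      show C.toMulticategory.plug k (C.ev [oneC] Y) = _
      unfold Multicategory.plug
      simp only [idFam, appendFam]
      exact eq_of_heq (cast_heq _ _)
    have bu : C.uAct uC Y = C.toMulticategory.comp
        (HomFam.cons uC (HomFam.cons (C.ident H) HomFam.nil)) (C.ev [oneC] Y) := by
      unfold ClosedMulticategory.uAct Multicategory.plugFirst
      simp only [idFam]
      exact eq_of_heq (cast_heq _ _)
    have hcomp1 : C.toMulticategory.comp (HomFam.cons inv HomFam.nil) (C.uAct uC Y)
        = C.ident Y := by
      unfold Multicategory.comp1 Multicategory.postcomp at hinv2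
      exact (eq_of_heq (cast_heq _ _)).symm.trans hinv2
    have bpf : C.toMulticategory.plugFirst uC g
        = C.toMulticategory.comp (HomFam.cons uC HomFam.nil) g := by
      unfold Multicategory.plugFirst
      simp only [idFam]
      exact eq_of_heq (cast_heq _ _)
    have c1 : C.toMulticategory.comp (HomFam.cons uC HomFam.nil) (C.ident oneC) = uC :=
      eq_of_heq (C.toMulticategory.comp_id uC)
    have c2 : C.toMulticategory.comp HomFam.nil k = k :=
      eq_of_heq (C.toMulticategory.id_comp k)
    have c3 : C.toMulticategory.comp HomFam.nil uC = uC :=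
      eq_of_heq (C.toMulticategory.id_comp uC)
    have c4 : C.toMulticategory.comp (HomFam.cons k HomFam.nil) (C.ident H) = k :=
      eq_of_heq (C.toMulticategory.comp_id k)
    have A1 := eq_of_heq (C.toMulticategory.assoc
      (FamFam.cons (HomFam.cons uC HomFam.nil) (FamFam.cons HomFam.nil FamFam.nil))
      (HomFam.cons (C.ident oneC) (HomFam.cons k HomFam.nil))
      (C.ev [oneC] Y))
    simp only [zipComp, flattenFam, appendFam] at A1
    rw [c1, c2] at A1
    have A2 := eq_of_heq (C.toMulticategory.assoc
      (FamFam.cons HomFam.nil (FamFam.cons (HomFam.cons k HomFam.nil) FamFam.nil))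
      (HomFam.cons uC (HomFam.cons (C.ident H) HomFam.nil))
      (C.ev [oneC] Y))
    simp only [zipComp, flattenFam, appendFam] at A2
    rw [c3, c4] at A2
    have A3 := eq_of_heq (C.toMulticategory.assoc
      (FamFam.cons (HomFam.cons f HomFam.nil) FamFam.nil)
      (HomFam.cons inv HomFam.nil)
      (C.uAct uC Y))
    simp only [zipComp, flattenFam, appendFam] at A3
    have claim1 : C.toMulticategory.plugFirst uC g = f := by
      calc C.toMulticategory.plugFirst uC g
          = C.toMulticategory.comp (HomFam.cons uC HomFam.nil) g := bpf
        _ = C.toMulticategory.comp (HomFam.cons uC HomFam.nil)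
              (C.toMulticategory.comp
                (HomFam.cons (C.ident oneC) (HomFam.cons k HomFam.nil))
                (C.ev [oneC] Y)) := by rw [← bg]
        _ = C.toMulticategory.comp (HomFam.cons uC (HomFam.cons k HomFam.nil))
              (C.ev [oneC] Y) := A1.symm
        _ = C.toMulticategory.comp (HomFam.cons k HomFam.nil)
              (C.toMulticategory.comp
                (HomFam.cons uC (HomFam.cons (C.ident H) HomFam.nil))
                (C.ev [oneC] Y)) := A2
        _ = C.toMulticategory.comp (HomFam.cons k HomFam.nil) (C.uAct uC Y) := by
              rw [← bu]
        _ = C.toMulticategory.comp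
              (HomFam.cons (C.toMulticategory.comp (HomFam.cons f HomFam.nil) inv)
                HomFam.nil) (C.uAct uC Y) := by rw [← bk]
        _ = C.toMulticategory.comp (HomFam.cons f HomFam.nil)
              (C.toMulticategory.comp (HomFam.cons inv HomFam.nil) (C.uAct uC Y)) := A3
        _ = C.toMulticategory.comp (HomFam.cons f HomFam.nil) (C.ident Y) := by
              rw [hcomp1]
        _ = f := eq_of_heq (C.toMulticategory.comp_id f)
    have bFf : Fm f = D.comp (HomFam.cons (Fm uC) HomFam.nil) (Fm g) := by
      conv_lhs => rw [← claim1, bpf]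
      exact (eq_of_heq (Fmc (HomFam.cons uC HomFam.nil) g)).trans (by simp only [mapFam])
    have bGf : Gm f = D.comp (HomFam.cons (Gm uC) HomFam.nil) (Gm g) := by
      conv_lhs => rw [← claim1, bpf]
      exact (eq_of_heq (Gmc (HomFam.cons uC HomFam.nil) g)).trans (by simp only [mapFam])
    rw [bFf, bGf, hu2, hmap2 oneC Y g]
  | cons X₁ Γ ih =>
    intro Y f
    let c : C.Hom Γ (C.ihom [X₁] Y) := C.curry (Xs := [X₁]) (Ys := Γ) (Z := Y) f
    have hc : C.toMulticategory.plug c (C.ev [X₁] Y) = f := C.plug_curry (Xs := [X₁]) (Ys := Γ) (Z := Y) f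
    have hcast : HEq (C.toMulticategory.comp
        (HomFam.cons (C.ident X₁) (HomFam.cons c HomFam.nil)) (C.ev [X₁] Y)) f := by
      rw [← hc]
      unfold Multicategory.plug
      simp only [idFam, appendFam]
      exact (cast_heq _ _).symm
    have hF := HEq.trans (map_heq Fo (fun {Xs Y} => @Fm Xs Y) (by simp) hcast).symm
      (Fmc (HomFam.cons (C.ident X₁) (HomFam.cons c HomFam.nil)) (C.ev [X₁] Y))
    have hG := HEq.trans (map_heq Fo (fun {Xs Y} => @Gm Xs Y) (by simp) hcast).symm
      (Gmc (HomFam.cons (C.ident X₁) (HomFam.cons c HomFam.nil)) (C.ev [X₁] Y))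
    refine eq_of_heq (hF.trans (HEq.trans (heq_of_eq ?_) hG.symm))
    simp only [mapFam]
    rw [Fmi, Gmi, ih _ c, hev X₁ Y]
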